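/- Let k be a field and consider the ring homomorphism k(t) ⊗_k k(s) → k(t) induced by p(t) ⊗ q(s) ↦ p(t)q(t), where k(t) and k(s) are fields of rational functions in one variable. The kernel of this homomorphism is the ideal of k(t) ⊗_k k(s) generated by t ⊗ 1 − 1 ⊗ s. -/
import Mathlib

open TensorProduct

/-- The kernel of the multiplication map `k(t) ⊗_k k(s) → k(t)`, `p(t) ⊗ q(s) ↦ p(t)q(t)`,
is the ideal generated by `t ⊗ 1 - 1 ⊗ s`. -/
theorem stmt1 (k : Type*) [Field k] :
    RingHom.ker (Algebra.TensorProduct.lmul' k (S := RatFunc k)) =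
      Ideal.span {(RatFunc.X ⊗ₜ[k] 1 - 1 ⊗ₜ[k] RatFunc.X : RatFunc k ⊗[k] RatFunc k)} := by
  set I : Ideal (RatFunc k ⊗[k] RatFunc k) :=
    Ideal.span {(RatFunc.X ⊗ₜ[k] 1 - 1 ⊗ₜ[k] RatFunc.X : RatFunc k ⊗[k] RatFunc k)} with hI
  have hmul : ∀ a b : RatFunc k,
      (1 : RatFunc k) ⊗ₜ[k] (a * b) - (a * b) ⊗ₜ[k] 1 =
        (1 : RatFunc k) ⊗ₜ[k] b * ((1 : RatFunc k) ⊗ₜ[k] a - a ⊗ₜ[k] 1)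
          + a ⊗ₜ[k] (1 : RatFunc k) * ((1 : RatFunc k) ⊗ₜ[k] b - b ⊗ₜ[k] 1) := by
    intro a b
    simp only [mul_sub, Algebra.TensorProduct.tmul_mul_tmul, one_mul, mul_one]
    rw [mul_comm b a]
    abel
  have hinv : ∀ a : RatFunc k,
      (1 : RatFunc k) ⊗ₜ[k] a⁻¹ - a⁻¹ ⊗ₜ[k] 1 =
        -(a⁻¹ ⊗ₜ[k] a⁻¹ * ((1 : RatFunc k) ⊗ₜ[k] a - a ⊗ₜ[k] 1)) := by
    intro a
    rcases eq_or_ne a 0 with rfl | ha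
    · simp
    · simp only [mul_sub, Algebra.TensorProduct.tmul_mul_tmul, one_mul, mul_one,
        inv_mul_cancel₀ ha]
      abel
  have hC : ∀ c : k, (1 : RatFunc k) ⊗ₜ[k] (algebraMap k (RatFunc k) c)
      - (algebraMap k (RatFunc k) c) ⊗ₜ[k] 1 = 0 := by
    intro c
    rw [Algebra.algebraMap_eq_smul_one, ← TensorProduct.smul_tmul, sub_self]
  have key : ∀ a : RatFunc k, (1 : RatFunc k) ⊗ₜ[k] a - a ⊗ₜ[k] 1 ∈ I := by
    have hX : (1 : RatFunc k) ⊗ₜ[k] RatFunc.X - RatFunc.X ⊗ₜ[k] 1 ∈ I := by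
      have : (1 : RatFunc k) ⊗ₜ[k] RatFunc.X - RatFunc.X ⊗ₜ[k] 1 =
          -(RatFunc.X ⊗ₜ[k] 1 - 1 ⊗ₜ[k] RatFunc.X : RatFunc k ⊗[k] RatFunc k) := by abel
      rw [this]
      exact neg_mem (Ideal.subset_span rfl)
    have hmulmem : ∀ a b : RatFunc k, (1 : RatFunc k) ⊗ₜ[k] a - a ⊗ₜ[k] 1 ∈ I →
        (1 : RatFunc k) ⊗ₜ[k] b - b ⊗ₜ[k] 1 ∈ I →
        (1 : RatFunc k) ⊗ₜ[k] (a * b) - (a * b) ⊗ₜ[k] 1 ∈ I := by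
      intro a b ha hb
      rw [hmul a b]
      exact add_mem (Ideal.mul_mem_left _ _ ha) (Ideal.mul_mem_left _ _ hb)
    have hpoly : ∀ p : Polynomial k,
        (1 : RatFunc k) ⊗ₜ[k] (algebraMap (Polynomial k) (RatFunc k) p)
          - (algebraMap (Polynomial k) (RatFunc k) p) ⊗ₜ[k] 1 ∈ I := by
      intro p
      induction p using Polynomial.induction_on with
      | C c =>
        rw [show algebraMap (Polynomial k) (RatFunc k) (Polynomial.C c)
            = algebraMap k (RatFunc k) c from rfl, hC]
        exact zero_mem _
      | add p q hp hq =>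
        rw [map_add]
        have : (1 : RatFunc k) ⊗ₜ[k] (algebraMap (Polynomial k) (RatFunc k) p
              + algebraMap (Polynomial k) (RatFunc k) q)
            - (algebraMap (Polynomial k) (RatFunc k) p
              + algebraMap (Polynomial k) (RatFunc k) q) ⊗ₜ[k] 1 =
            ((1 : RatFunc k) ⊗ₜ[k] algebraMap (Polynomial k) (RatFunc k) p
              - algebraMap (Polynomial k) (RatFunc k) p ⊗ₜ[k] 1)
            + ((1 : RatFunc k) ⊗ₜ[k] algebraMap (Polynomial k) (RatFunc k) q
              - algebraMap (Polynomial k) (RatFunc k) q ⊗ₜ[k] 1) := by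
          simp [TensorProduct.tmul_add, TensorProduct.add_tmul]
          abel
        rw [this]
        exact add_mem hp hq
      | monomial n c hp =>
        rw [pow_succ, ← mul_assoc, map_mul]
        refine hmulmem _ _ hp ?_
        rw [RatFunc.algebraMap_X]
        exact hX
    intro a
    induction a using RatFunc.induction_on with
    | f p q hq =>
      rw [div_eq_mul_inv]
      refine hmulmem _ _ (hpoly p) ?_
      rw [hinv]
      exact neg_mem (Ideal.mul_mem_left _ _ (hpoly q))
  apply le_antisymm
  · refine le_trans (le_of_eq (KaehlerDifferential.span_range_eq_ideal k (RatFunc k)).symm) ?_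
    rw [Ideal.span_le]
    rintro _ ⟨s, rfl⟩
    exact key s
  · rw [Ideal.span_le, Set.singleton_subset_iff]
    simp [RingHom.mem_ker]
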